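/- arXiv:2204.05475 — 2 statements merged into one kernel-verified Lean document; each statement's English description precedes it below -/
import Mathlib

section
/- For every natural number B, any finite connected subgraph of the infinite grid whose number of vertices exceeds ⌈B(B+2)/16⌉ has at least B+1 escaping edges. In other words, the infinite grid satisfies the expansion property with polynomial bound L(B) = ⌈B(B+2)/16⌉. -/
/-- The infinite grid graph on ℤ × ℤ: two points are adjacent iff their ℓ¹-distance is 1. -/
def grid : SimpleGraph (ℤ × ℤ) where
  Adj p q := (p.1 - q.1).natAbs + (p.2 - q.2).natAbs = 1
  symm := by
    constructor
    intro p q h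
    omega
  loopless := by
    constructor
    intro p h
    simp at h


/-- The escaping edges from a vertex set `W` in a graph `G`, recorded as ordered pairs
`(a, b)` with `a ∈ W`, `a` adjacent to `b`, and `b` lying in an infinite connected
component of the subgraph induced on the complement of `W`. -/
def escaping {V : Type*} (G : SimpleGraph V) (W : Set V) : Set (V × V) :=
  {p | p.1 ∈ W ∧ G.Adj p.1 p.2 ∧ ∃ h : p.2 ∈ Wᶜ,
    {c : ↥(Wᶜ) | (G.induce Wᶜ).Reachable ⟨p.2, h⟩ c}.Infinite}

/-- The expansion property with bound `L`: every finite vertex set with at most `B`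
escaping edges has cardinality at most `L B`. -/
def ExpansionProp {V : Type*} (G : SimpleGraph V) (L : ℕ → ℕ) : Prop :=
  ∀ (B : ℕ) (W : Set V), W.Finite → (escaping G W).encard ≤ B → W.ncard ≤ L B

lemma ray_escaping (W : Set (ℤ × ℤ)) (p d : ℤ × ℤ) (hp : p ∈ W)
    (hd : d.1.natAbs + d.2.natAbs = 1)
    (h : ∀ n : ℕ, (p.1 + (n + 1) * d.1, p.2 + (n + 1) * d.2) ∉ W) :
    (p, (p.1 + d.1, p.2 + d.2)) ∈ escaping grid W := by
  have hmem : ∀ n : ℕ, (p.1 + (n + 1) * d.1, p.2 + (n + 1) * d.2) ∈ Wᶜ := fun n => h n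
  refine ⟨hp, ?_, ?_⟩
  · show ((p.1 - (p.1 + d.1)).natAbs + (p.2 - (p.2 + d.2)).natAbs = 1)
    omega
  · have h0 : (p.1 + d.1, p.2 + d.2) ∈ Wᶜ := by
      have := hmem 0; simpa using this
    refine ⟨h0, ?_⟩
    set f : ℕ → ↥(Wᶜ) := fun n => ⟨(p.1 + (n + 1) * d.1, p.2 + (n + 1) * d.2), hmem n⟩ with hf
    have hdne : d.1 ≠ 0 ∨ d.2 ≠ 0 := by omega
    have hinj : Function.Injective f := by
      intro n m hnm
      have h1 : p.1 + (n + 1 : ℤ) * d.1 = p.1 + (m + 1) * d.1 := congrArg (Prod.fst ∘ Subtype.val) hnm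
      have h2 : p.2 + (n + 1 : ℤ) * d.2 = p.2 + (m + 1) * d.2 := congrArg (Prod.snd ∘ Subtype.val) hnm
      rcases hdne with hd1 | hd1
      · have : (n : ℤ) = m := by
          have := mul_right_cancel₀ hd1 (by linarith : ((n : ℤ) + 1) * d.1 = (m + 1) * d.1)
          linarith
        exact_mod_cast this
      · have : (n : ℤ) = m := by
          have := mul_right_cancel₀ hd1 (by linarith : ((n : ℤ) + 1) * d.2 = (m + 1) * d.2)
          linarith
        exact_mod_cast this
    have hreach : ∀ n : ℕ, (grid.induce Wᶜ).Reachable ⟨(p.1 + d.1, p.2 + d.2), h0⟩ (f n) := by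
      intro n
      induction n with
      | zero =>
        have : f 0 = ⟨(p.1 + d.1, p.2 + d.2), h0⟩ := by
          apply Subtype.ext; simp [hf]
        rw [this]
      | succ k ih =>
        refine ih.trans (SimpleGraph.Adj.reachable ?_)
        show grid.Adj _ _
        show ((p.1 + (k + 1) * d.1 - (p.1 + ((k : ℤ) + 1 + 1) * d.1)).natAbs +
          (p.2 + (k + 1) * d.2 - (p.2 + ((k : ℤ) + 1 + 1) * d.2)).natAbs = 1)
        push_cast
        have e1 : p.1 + ((k : ℤ) + 1) * d.1 - (p.1 + ((k : ℤ) + 1 + 1) * d.1) = -d.1 := by ring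
        have e2 : p.2 + ((k : ℤ) + 1) * d.2 - (p.2 + ((k : ℤ) + 1 + 1) * d.2) = -d.2 := by ring
        rw [e1, e2]
        omega
    exact Set.infinite_of_injective_forall_mem hinj hreach

/-- The infinite grid satisfies the expansion property with the polynomial bound
`L B = ⌈B * (B + 2) / 16⌉`: every finite connected subgraph with more than `L B`
vertices has at least `B + 1` escaping edges. -/
theorem grid_expansion (B : ℕ) (W : Set (ℤ × ℤ)) (hW : W.Finite)
    (hconn : (grid.induce W).Connected)
    (hcard : (⌈(B * (B + 2) : ℚ) / 16⌉₊ : ℕ) < W.ncard) :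
    ((B + 1 : ℕ) : ℕ∞) ≤ (escaping grid W).encard := by
  classical
  set Wf := hW.toFinset with hWf
  have hWmem : ∀ q : ℤ × ℤ, q ∈ Wf ↔ q ∈ W := fun q => hW.mem_toFinset
  set X := Wf.image Prod.fst with hX
  set Y := Wf.image Prod.snd with hY
  -- |W| ≤ |X| * |Y|
  have hsub : Wf ⊆ X ×ˢ Y := by
    intro q hq
    exact Finset.mem_product.2 ⟨Finset.mem_image_of_mem _ hq, Finset.mem_image_of_mem _ hq⟩
  have hcard1 : Wf.card ≤ X.card * Y.card := by
    simpa [Finset.card_product] using Finset.card_le_card hsub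
  -- the four finsets of extremal points
  set Etop := Wf.filter (fun p => ∀ q ∈ Wf, q.1 = p.1 → q.2 ≤ p.2) with hEtop
  set Ebot := Wf.filter (fun p => ∀ q ∈ Wf, q.1 = p.1 → p.2 ≤ q.2) with hEbot
  set Ergt := Wf.filter (fun p => ∀ q ∈ Wf, q.2 = p.2 → q.1 ≤ p.1) with hErgt
  set Elft := Wf.filter (fun p => ∀ q ∈ Wf, q.2 = p.2 → p.1 ≤ q.1) with hElft
  -- each column has a top point
  have htopcard : X.card ≤ Etop.card := by
    have hsub2 : X ⊆ Etop.image Prod.fst := by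
      intro x hx
      obtain ⟨q, hq, hqx⟩ := Finset.mem_image.1 hx
      have hne : (Wf.filter (fun r => r.1 = x)).Nonempty := ⟨q, Finset.mem_filter.2 ⟨hq, hqx⟩⟩
      obtain ⟨m, hm, hmax⟩ := Finset.exists_max_image _ Prod.snd hne
      obtain ⟨hmW, hmx⟩ := Finset.mem_filter.1 hm
      refine Finset.mem_image.2 ⟨m, Finset.mem_filter.2 ⟨hmW, ?_⟩, hmx⟩
      intro r hr hrx
      exact hmax r (Finset.mem_filter.2 ⟨hr, by rw [hrx, hmx]⟩)
    calc X.card ≤ (Etop.image Prod.fst).card := Finset.card_le_card hsub2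
      _ ≤ Etop.card := Finset.card_image_le
  have hbotcard : X.card ≤ Ebot.card := by
    have hsub2 : X ⊆ Ebot.image Prod.fst := by
      intro x hx
      obtain ⟨q, hq, hqx⟩ := Finset.mem_image.1 hx
      have hne : (Wf.filter (fun r => r.1 = x)).Nonempty := ⟨q, Finset.mem_filter.2 ⟨hq, hqx⟩⟩
      obtain ⟨m, hm, hmax⟩ := Finset.exists_max_image _ (fun r => -r.2) hne
      obtain ⟨hmW, hmx⟩ := Finset.mem_filter.1 hm
      refine Finset.mem_image.2 ⟨m, Finset.mem_filter.2 ⟨hmW, ?_⟩, hmx⟩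
      intro r hr hrx
      have := hmax r (Finset.mem_filter.2 ⟨hr, by rw [hrx, hmx]⟩)
      omega
    calc X.card ≤ (Ebot.image Prod.fst).card := Finset.card_le_card hsub2
      _ ≤ Ebot.card := Finset.card_image_le
  have hrgtcard : Y.card ≤ Ergt.card := by
    have hsub2 : Y ⊆ Ergt.image Prod.snd := by
      intro y hy
      obtain ⟨q, hq, hqy⟩ := Finset.mem_image.1 hy
      have hne : (Wf.filter (fun r => r.2 = y)).Nonempty := ⟨q, Finset.mem_filter.2 ⟨hq, hqy⟩⟩
      obtain ⟨m, hm, hmax⟩ := Finset.exists_max_image _ Prod.fst hne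
      obtain ⟨hmW, hmy⟩ := Finset.mem_filter.1 hm
      refine Finset.mem_image.2 ⟨m, Finset.mem_filter.2 ⟨hmW, ?_⟩, hmy⟩
      intro r hr hry
      exact hmax r (Finset.mem_filter.2 ⟨hr, by rw [hry, hmy]⟩)
    calc Y.card ≤ (Ergt.image Prod.snd).card := Finset.card_le_card hsub2
      _ ≤ Ergt.card := Finset.card_image_le
  have hlftcard : Y.card ≤ Elft.card := by
    have hsub2 : Y ⊆ Elft.image Prod.snd := by
      intro y hy
      obtain ⟨q, hq, hqy⟩ := Finset.mem_image.1 hy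
      have hne : (Wf.filter (fun r => r.2 = y)).Nonempty := ⟨q, Finset.mem_filter.2 ⟨hq, hqy⟩⟩
      obtain ⟨m, hm, hmax⟩ := Finset.exists_max_image _ (fun r => -r.1) hne
      obtain ⟨hmW, hmy⟩ := Finset.mem_filter.1 hm
      refine Finset.mem_image.2 ⟨m, Finset.mem_filter.2 ⟨hmW, ?_⟩, hmy⟩
      intro r hr hry
      have := hmax r (Finset.mem_filter.2 ⟨hr, by rw [hry, hmy]⟩)
      omega
    calc Y.card ≤ (Elft.image Prod.snd).card := Finset.card_le_card hsub2
      _ ≤ Elft.card := Finset.card_image_le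
  -- maps to escaping edges
  set ftop : ℤ × ℤ → (ℤ × ℤ) × (ℤ × ℤ) := fun p => (p, (p.1, p.2 + 1)) with hftop
  set fbot : ℤ × ℤ → (ℤ × ℤ) × (ℤ × ℤ) := fun p => (p, (p.1, p.2 - 1)) with hfbot
  set frgt : ℤ × ℤ → (ℤ × ℤ) × (ℤ × ℤ) := fun p => (p, (p.1 + 1, p.2)) with hfrgt
  set flft : ℤ × ℤ → (ℤ × ℤ) × (ℤ × ℤ) := fun p => (p, (p.1 - 1, p.2)) with hflft
  have injtop : Function.Injective ftop := fun a b h => congrArg Prod.fst h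
  have injbot : Function.Injective fbot := fun a b h => congrArg Prod.fst h
  have injrgt : Function.Injective frgt := fun a b h => congrArg Prod.fst h
  have injlft : Function.Injective flft := fun a b h => congrArg Prod.fst h
  set E : Finset ((ℤ × ℤ) × (ℤ × ℤ)) :=
    Etop.image ftop ∪ Ebot.image fbot ∪ Ergt.image frgt ∪ Elft.image flft with hE
  -- disjointness
  have dtb : Disjoint (Etop.image ftop) (Ebot.image fbot) := by
    rw [Finset.disjoint_left]
    rintro e he1 he2
    obtain ⟨a, -, rfl⟩ := Finset.mem_image.1 he1
    obtain ⟨b, -, hb⟩ := Finset.mem_image.1 he2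
    have h1 : b = a := congrArg Prod.fst hb
    subst h1
    have := congrArg (fun e => e.2.2) hb
    simp only [hftop, hfbot] at this
    omega
  have dtr : Disjoint (Etop.image ftop ∪ Ebot.image fbot) (Ergt.image frgt) := by
    rw [Finset.disjoint_left]
    rintro e he1 he2
    obtain ⟨b, -, hb⟩ := Finset.mem_image.1 he2
    rcases Finset.mem_union.1 he1 with h | h
    · obtain ⟨a, -, rfl⟩ := Finset.mem_image.1 h
      have h1 : b = a := congrArg Prod.fst hb
      subst h1
      have h2 := congrArg (fun e => e.2.1) hb
      have h3 := congrArg (fun e => e.2.2) hb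
      simp only [hftop, hfrgt] at h2 h3
      omega
    · obtain ⟨a, -, rfl⟩ := Finset.mem_image.1 h
      have h1 : b = a := congrArg Prod.fst hb
      subst h1
      have h2 := congrArg (fun e => e.2.1) hb
      have h3 := congrArg (fun e => e.2.2) hb
      simp only [hfbot, hfrgt] at h2 h3
      omega
  have dtl : Disjoint (Etop.image ftop ∪ Ebot.image fbot ∪ Ergt.image frgt) (Elft.image flft) := by
    rw [Finset.disjoint_left]
    rintro e he1 he2
    obtain ⟨b, -, hb⟩ := Finset.mem_image.1 he2
    rcases Finset.mem_union.1 he1 with h | h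
    · rcases Finset.mem_union.1 h with h' | h'
      · obtain ⟨a, -, rfl⟩ := Finset.mem_image.1 h'
        have h1 : b = a := congrArg Prod.fst hb
        subst h1
        have h2 := congrArg (fun e => e.2.1) hb
        have h3 := congrArg (fun e => e.2.2) hb
        simp only [hftop, hflft] at h2 h3
        omega
      · obtain ⟨a, -, rfl⟩ := Finset.mem_image.1 h'
        have h1 : b = a := congrArg Prod.fst hb
        subst h1
        have h2 := congrArg (fun e => e.2.1) hb
        have h3 := congrArg (fun e => e.2.2) hb
        simp only [hfbot, hflft] at h2 h3
        omega
    · obtain ⟨a, -, rfl⟩ := Finset.mem_image.1 h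
      have h1 : b = a := congrArg Prod.fst hb
      subst h1
      have h2 := congrArg (fun e => e.2.1) hb
      simp only [hfrgt, hflft] at h2
      omega
  have hEcard : Etop.card + Ebot.card + Ergt.card + Elft.card = E.card := by
    rw [hE, Finset.card_union_of_disjoint dtl, Finset.card_union_of_disjoint dtr,
      Finset.card_union_of_disjoint dtb, Finset.card_image_of_injective _ injtop,
      Finset.card_image_of_injective _ injbot, Finset.card_image_of_injective _ injrgt,
      Finset.card_image_of_injective _ injlft]
  -- E ⊆ escaping
  have hEesc : (E : Set ((ℤ × ℤ) × (ℤ × ℤ))) ⊆ escaping grid W := by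
    intro e he
    rw [hE] at he
    simp only [Finset.coe_union, Set.mem_union, Finset.mem_coe] at he
    rcases he with ((h | h) | h) | h
    · obtain ⟨a, ha, rfl⟩ := Finset.mem_image.1 h
      obtain ⟨haW, hmax⟩ := Finset.mem_filter.1 ha
      have := ray_escaping W a (0, 1) ((hWmem a).1 haW) (by norm_num) ?_
      · simpa [hftop] using this
      · intro n hn
        have := hmax _ ((hWmem _).2 (by simpa using hn)) (by simp)
        simp at this
        omega
    · obtain ⟨a, ha, rfl⟩ := Finset.mem_image.1 h
      obtain ⟨haW, hmax⟩ := Finset.mem_filter.1 ha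
      have := ray_escaping W a (0, -1) ((hWmem a).1 haW) (by norm_num) ?_
      · simpa [hfbot, sub_eq_add_neg] using this
      · intro n hn
        have := hmax _ ((hWmem _).2 (by simpa using hn)) (by simp)
        simp at this
        omega
    · obtain ⟨a, ha, rfl⟩ := Finset.mem_image.1 h
      obtain ⟨haW, hmax⟩ := Finset.mem_filter.1 ha
      have := ray_escaping W a (1, 0) ((hWmem a).1 haW) (by norm_num) ?_
      · simpa [hfrgt] using this
      · intro n hn
        have := hmax _ ((hWmem _).2 (by simpa using hn)) (by simp)
        simp at this
        omega
    · obtain ⟨a, ha, rfl⟩ := Finset.mem_image.1 h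
      obtain ⟨haW, hmax⟩ := Finset.mem_filter.1 ha
      have := ray_escaping W a (-1, 0) ((hWmem a).1 haW) (by norm_num) ?_
      · simpa [hflft, sub_eq_add_neg] using this
      · intro n hn
        have := hmax _ ((hWmem _).2 (by simpa using hn)) (by simp)
        simp at this
        omega
  -- arithmetic
  have hWcard : W.ncard = Wf.card := Set.ncard_eq_toFinset_card W hW
  set c := ⌈(B * (B + 2) : ℚ) / 16⌉₊ with hc
  have hceil : (B * (B + 2) : ℕ) ≤ 16 * c := by
    have h1 : (B * (B + 2) : ℚ) / 16 ≤ (c : ℚ) := Nat.le_ceil _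
    have h2 : (B * (B + 2) : ℚ) ≤ 16 * c := by linarith
    exact_mod_cast h2
  have hp : c < Wf.card := by rw [← hWcard]; exact hcard
  have key : B + 1 ≤ E.card := by
    rw [← hEcard]
    have hge : B * (B + 2) + 16 ≤ 16 * Wf.card := by omega
    have h16 : ((B : ℤ) + 1) ^ 2 ≤ (2 * ((X.card : ℤ) + Y.card)) ^ 2 := by
      have c1 : (Wf.card : ℤ) ≤ (X.card : ℤ) * Y.card := by exact_mod_cast hcard1
      have c2 : (B : ℤ) * (B + 2) + 16 ≤ 16 * Wf.card := by exact_mod_cast hge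
      nlinarith [sq_nonneg ((X.card : ℤ) - Y.card)]
    have h17 : ((B : ℤ) + 1) ≤ 2 * ((X.card : ℤ) + Y.card) := by
      nlinarith [h16]
    have h18 : B + 1 ≤ 2 * (X.card + Y.card) := by exact_mod_cast h17
    omega
  calc ((B + 1 : ℕ) : ℕ∞) ≤ (E.card : ℕ∞) := by exact_mod_cast key
    _ = (E : Set ((ℤ × ℤ) × (ℤ × ℤ))).encard := (Set.encard_coe_eq_coe_finsetCard E).symm
    _ ≤ (escaping grid W).encard := Set.encard_mono hEesc
end

section
/- In the infinite grid graph ℤ × ℤ, for any finite set Ṽ of vertices and any budget B, if there exists a finite edge set H with |H| ≤ B such that every vertex of Ṽ lies in a finite connected component of the grid minus H, then each such component has at most ⌈B(B+2)/16⌉ vertices and diameter at most ⌈B(B+2)/16⌉ − 1. -/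
noncomputable def fmax (T : Finset ℤ) : ℤ := WithBot.unbotD 0 T.max
noncomputable def fmin (T : Finset ℤ) : ℤ := WithTop.untopD 0 T.min

lemma fmax_spec {T : Finset ℤ} (hT : T.Nonempty) : fmax T ∈ T ∧ ∀ a ∈ T, a ≤ fmax T := by
  obtain ⟨m, hm⟩ := Finset.max_of_nonempty hT
  have h1 : fmax T = m := by simp [fmax, hm]
  rw [h1]
  exact ⟨Finset.mem_of_max hm, fun a ha => Finset.le_max_of_eq ha hm⟩

lemma fmin_spec {T : Finset ℤ} (hT : T.Nonempty) : fmin T ∈ T ∧ ∀ a ∈ T, fmin T ≤ a := by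
  obtain ⟨m, hm⟩ := Finset.min_of_nonempty hT
  have h1 : fmin T = m := by simp [fmin, hm]
  rw [h1]
  exact ⟨Finset.mem_of_min hm, fun a ha => Finset.min_le_of_eq ha hm⟩

lemma grid_boundary (S : Finset (ℤ × ℤ)) (hS : S.Nonempty) :
    ∃ E : Finset (Sym2 (ℤ × ℤ)),
      (∀ e ∈ E, ∃ p q : ℤ × ℤ, e = s(p, q) ∧ grid.Adj p q ∧ p ∈ S ∧ q ∉ S) ∧
      16 * S.card ≤ E.card * E.card := by
  classical
  set cols : Finset ℤ := S.image Prod.fst with hcols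
  set rows : Finset ℤ := S.image Prod.snd with hrows
  set col : ℤ → Finset ℤ := fun x => (S.filter fun p => p.1 = x).image Prod.snd with hcol
  set row : ℤ → Finset ℤ := fun y => (S.filter fun p => p.2 = y).image Prod.fst with hrow
  have hcolne : ∀ x ∈ cols, (col x).Nonempty := by
    intro x hx
    obtain ⟨p, hp, rfl⟩ := Finset.mem_image.mp hx
    exact ⟨p.2, Finset.mem_image.mpr ⟨p, Finset.mem_filter.mpr ⟨hp, rfl⟩, rfl⟩⟩
  have hrowne : ∀ y ∈ rows, (row y).Nonempty := by
    intro y hy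
    obtain ⟨p, hp, rfl⟩ := Finset.mem_image.mp hy
    exact ⟨p.1, Finset.mem_image.mpr ⟨p, Finset.mem_filter.mpr ⟨hp, rfl⟩, rfl⟩⟩
  have hmemcol : ∀ x t, t ∈ col x ↔ ((x, t) ∈ S) := by
    intro x t
    simp only [hcol, Finset.mem_image, Finset.mem_filter]
    constructor
    · rintro ⟨p, ⟨hp, h1⟩, h2⟩
      have : p = (x, t) := by ext <;> simp [h1, h2]
      rwa [this] at hp
    · intro h; exact ⟨(x, t), ⟨h, rfl⟩, rfl⟩
  have hmemrow : ∀ y t, t ∈ row y ↔ ((t, y) ∈ S) := by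
    intro y t
    simp only [hrow, Finset.mem_image, Finset.mem_filter]
    constructor
    · rintro ⟨p, ⟨hp, h1⟩, h2⟩
      have : p = (t, y) := by ext <;> simp [h1, h2]
      rwa [this] at hp
    · intro h; exact ⟨(t, y), ⟨h, rfl⟩, rfl⟩
  set topE : ℤ → Sym2 (ℤ × ℤ) := fun x => s((x, fmax (col x)), (x, fmax (col x) + 1)) with htopE
  set botE : ℤ → Sym2 (ℤ × ℤ) := fun x => s((x, fmin (col x)), (x, fmin (col x) - 1)) with hbotE
  set rigE : ℤ → Sym2 (ℤ × ℤ) := fun y => s((fmax (row y), y), (fmax (row y) + 1, y)) with hrigE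
  set lefE : ℤ → Sym2 (ℤ × ℤ) := fun y => s((fmin (row y), y), (fmin (row y) - 1, y)) with hlefE
  refine ⟨(cols.image topE ∪ cols.image botE) ∪ (rows.image rigE ∪ rows.image lefE), ?_, ?_⟩
  · intro e he
    simp only [Finset.mem_union, Finset.mem_image] at he
    have hadjV : ∀ x t : ℤ, grid.Adj (x, t) (x, t + 1) := by
      intro x t; show (x - x).natAbs + (t - (t + 1)).natAbs = 1; omega
    have hadjV' : ∀ x t : ℤ, grid.Adj (x, t) (x, t - 1) := by
      intro x t; show (x - x).natAbs + (t - (t - 1)).natAbs = 1; omega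
    have hadjH : ∀ x t : ℤ, grid.Adj (t, x) (t + 1, x) := by
      intro x t; show (t - (t + 1)).natAbs + (x - x).natAbs = 1; omega
    have hadjH' : ∀ x t : ℤ, grid.Adj (t, x) (t - 1, x) := by
      intro x t; show (t - (t - 1)).natAbs + (x - x).natAbs = 1; omega
    rcases he with (⟨x, hx, rfl⟩ | ⟨x, hx, rfl⟩) | (⟨y, hy, rfl⟩ | ⟨y, hy, rfl⟩)
    · obtain ⟨hm, hub⟩ := fmax_spec (hcolne x hx)
      refine ⟨_, _, rfl, hadjV x _, (hmemcol x _).mp hm, fun hc => ?_⟩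
      have := hub _ ((hmemcol x _).mpr hc); omega
    · obtain ⟨hm, hlb⟩ := fmin_spec (hcolne x hx)
      refine ⟨_, _, rfl, hadjV' x _, (hmemcol x _).mp hm, fun hc => ?_⟩
      have := hlb _ ((hmemcol x _).mpr hc); omega
    · obtain ⟨hm, hub⟩ := fmax_spec (hrowne y hy)
      refine ⟨_, _, rfl, hadjH y _, (hmemrow y _).mp hm, fun hc => ?_⟩
      have := hub _ ((hmemrow y _).mpr hc); omega
    · obtain ⟨hm, hlb⟩ := fmin_spec (hrowne y hy)
      refine ⟨_, _, rfl, hadjH' y _, (hmemrow y _).mp hm, fun hc => ?_⟩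
      have := hlb _ ((hmemrow y _).mpr hc); omega
  · -- cardinality
    have hinj1 : Set.InjOn topE cols := by
      intro a _ b _ h
      simp only [htopE, Sym2.eq_iff, Prod.mk.injEq] at h
      tauto
    have hinj2 : Set.InjOn botE cols := by
      intro a _ b _ h
      simp only [hbotE, Sym2.eq_iff, Prod.mk.injEq] at h
      tauto
    have hinj3 : Set.InjOn rigE rows := by
      intro a _ b _ h
      simp only [hrigE, Sym2.eq_iff, Prod.mk.injEq] at h
      tauto
    have hinj4 : Set.InjOn lefE rows := by
      intro a _ b _ h
      simp only [hlefE, Sym2.eq_iff, Prod.mk.injEq] at h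
      tauto
    have hd12 : Disjoint (cols.image topE) (cols.image botE) := by
      rw [Finset.disjoint_left]
      rintro e he1 he2
      obtain ⟨a, ha, rfl⟩ := Finset.mem_image.mp he1
      obtain ⟨b, hb, hba⟩ := Finset.mem_image.mp he2
      simp only [htopE, hbotE, Sym2.eq_iff, Prod.mk.injEq] at hba
      obtain ⟨hma, _⟩ := fmax_spec (hcolne a ha)
      obtain ⟨_, hlba⟩ := fmin_spec (hcolne a ha)
      have := hlba _ hma
      rcases hba with ⟨⟨rfl, h1⟩, _, h2⟩ | ⟨⟨rfl, h1⟩, _, h2⟩ <;> omega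
    have hd34 : Disjoint (rows.image rigE) (rows.image lefE) := by
      rw [Finset.disjoint_left]
      rintro e he1 he2
      obtain ⟨a, ha, rfl⟩ := Finset.mem_image.mp he1
      obtain ⟨b, hb, hba⟩ := Finset.mem_image.mp he2
      simp only [hrigE, hlefE, Sym2.eq_iff, Prod.mk.injEq] at hba
      obtain ⟨hma, _⟩ := fmax_spec (hrowne a ha)
      obtain ⟨_, hlba⟩ := fmin_spec (hrowne a ha)
      have := hlba _ hma
      rcases hba with ⟨⟨h1, rfl⟩, h2, _⟩ | ⟨⟨h1, rfl⟩, h2, _⟩ <;> omega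
    have hdVH : Disjoint (cols.image topE ∪ cols.image botE)
        (rows.image rigE ∪ rows.image lefE) := by
      rw [Finset.disjoint_left]
      rintro e he1 he2
      simp only [Finset.mem_union, Finset.mem_image] at he1 he2
      rcases he1 with ⟨a, _, rfl⟩ | ⟨a, _, rfl⟩ <;>
        rcases he2 with ⟨b, _, hba⟩ | ⟨b, _, hba⟩ <;>
        · simp only [htopE, hbotE, hrigE, hlefE, Sym2.eq_iff, Prod.mk.injEq] at hba
          omega
    have hc1 : (cols.image topE).card = cols.card := Finset.card_image_of_injOn hinj1
    have hc2 : (cols.image botE).card = cols.card := Finset.card_image_of_injOn hinj2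
    have hc3 : (rows.image rigE).card = rows.card := Finset.card_image_of_injOn hinj3
    have hc4 : (rows.image lefE).card = rows.card := Finset.card_image_of_injOn hinj4
    rw [Finset.card_union_of_disjoint hdVH, Finset.card_union_of_disjoint hd12,
      Finset.card_union_of_disjoint hd34, hc1, hc2, hc3, hc4]
    have hSle : S.card ≤ cols.card * rows.card := by
      have : S ⊆ cols ×ˢ rows := by
        intro p hp
        rw [Finset.mem_product]
        exact ⟨Finset.mem_image_of_mem _ hp, Finset.mem_image_of_mem _ hp⟩
      simpa [Finset.card_product] using Finset.card_le_card this
    nlinarith [sq_nonneg (cols.card - rows.card : ℤ), hSle]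

lemma walk_support_reachable {V : Type*} {G : SimpleGraph V} {a b u : V} (p : G.Walk a b)
    (hu : u ∈ p.support) : G.Reachable a u := by
  induction p with
  | nil => simp at hu; subst hu; rfl
  | cons h q ih =>
    rw [SimpleGraph.Walk.support_cons] at hu
    rcases List.mem_cons.mp hu with rfl | hu
    · rfl
    · exact (h.reachable).trans (ih hu)

/-- In the infinite grid, if a finite edge set `H` of size at most `B` is such that every
vertex of a finite set `Vt` lies in a finite connected component of the grid minus `H`,
then each such component has at most `⌈B * (B + 2) / 16⌉` vertices and diameter at most
`⌈B * (B + 2) / 16⌉ - 1`. -/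
theorem grid_contained_component_small (Vt : Set (ℤ × ℤ)) (hVt : Vt.Finite) (B : ℕ)
    (H : Set (Sym2 (ℤ × ℤ))) (hHB : H.encard ≤ B)
    (hfin : ∀ v ∈ Vt, {y : ℤ × ℤ | (grid.deleteEdges H).Reachable v y}.Finite) :
    ∀ v ∈ Vt,
      {y : ℤ × ℤ | (grid.deleteEdges H).Reachable v y}.ncard ≤ ⌈(B * (B + 2) : ℚ) / 16⌉₊ ∧
      ∀ y z : ℤ × ℤ, (grid.deleteEdges H).Reachable v y →
        (grid.deleteEdges H).Reachable v z →
        (grid.deleteEdges H).dist y z ≤ ⌈(B * (B + 2) : ℚ) / 16⌉₊ - 1 := by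
  intro v hv
  have hC := hfin v hv
  set C := {y : ℤ × ℤ | (grid.deleteEdges H).Reachable v y} with hCdef
  set S : Finset (ℤ × ℤ) := hC.toFinset with hSdef
  have hmemS : ∀ y, y ∈ S ↔ (grid.deleteEdges H).Reachable v y := by
    intro y; rw [hSdef, Set.Finite.mem_toFinset]; rfl
  have hvS : v ∈ S := (hmemS v).mpr (SimpleGraph.Reachable.refl v)
  obtain ⟨E, hEb, hEcard⟩ := grid_boundary S ⟨v, hvS⟩
  have hEH : (E : Set (Sym2 (ℤ × ℤ))) ⊆ H := by
    intro e he
    obtain ⟨p, q, rfl, hadj, hp, hq⟩ := hEb e he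
    by_contra hc
    exact hq ((hmemS q).mpr (((hmemS p).mp hp).trans
      (SimpleGraph.Adj.reachable (by rw [SimpleGraph.deleteEdges_adj]; exact ⟨hadj, hc⟩))))
  have hEB : E.card ≤ B := by
    have := (Set.encard_mono hEH).trans hHB
    rw [Set.encard_coe_eq_coe_finsetCard] at this
    exact_mod_cast this
  have hkey : 16 * S.card ≤ B * B := hEcard.trans (Nat.mul_le_mul hEB hEB)
  have hcard : S.card ≤ ⌈(B * (B + 2) : ℚ) / 16⌉₊ := by
    have hq : (S.card : ℚ) ≤ (B * (B + 2) : ℚ) / 16 := by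
      have h16 : (16 * S.card : ℚ) ≤ (B : ℚ) * B := by exact_mod_cast hkey
      have hB0 : (0 : ℚ) ≤ (B : ℚ) := by positivity
      nlinarith
    exact_mod_cast hq.trans (Nat.le_ceil _)
  have hnc : C.ncard = S.card := Set.ncard_eq_toFinset_card C hC
  refine ⟨by rw [hnc]; exact hcard, ?_⟩
  intro y z hy hz
  have hyz : (grid.deleteEdges H).Reachable y z := hy.symm.trans hz
  obtain ⟨p⟩ := hyz
  have hdist : (grid.deleteEdges H).dist y z ≤ p.bypass.length := SimpleGraph.dist_le _
  have hnodup : p.bypass.support.Nodup := p.bypass_isPath.support_nodup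
  have hsub : p.bypass.support.toFinset ⊆ S := by
    intro u hu
    rw [List.mem_toFinset] at hu
    exact (hmemS u).mpr (hy.trans (walk_support_reachable p
      (SimpleGraph.Walk.support_bypass_subset p hu)))
  have hlen : p.bypass.length + 1 ≤ S.card := by
    have h1 : p.bypass.support.toFinset.card = p.bypass.support.length :=
      List.toFinset_card_of_nodup hnodup
    have h2 := Finset.card_le_card hsub
    rw [h1, SimpleGraph.Walk.length_support] at h2
    exact h2
  omega
end
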